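/- Let (Γ, G) ∈ OG(4) be basic of biquasiprimitive type with bipartition {Δ, Δ′} preserved by the index-2 subgroup G⁺ of G. Then any nontrivial intransitive normal subgroup N of G has exactly the two orbits Δ and Δ′ on the vertex set; in particular N ≤ G⁺. -/

import Mathlib

theorem stmt_6 {V : Type*} [Fintype V] (Γ : SimpleGraph V) [DecidableRel Γ.Adj]
    (hcard : 5 ≤ Fintype.card V)
    (hconn : Γ.Connected) (hval : ∀ v : V, Γ.degree v = 4)
    (G : Subgroup (Equiv.Perm V))
    (hAut : ∀ g ∈ G, ∀ u v : V, Γ.Adj (g u) (g v) ↔ Γ.Adj u v)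
    (hVT : ∀ u v : V, ∃ g ∈ G, g u = v)
    (hET : ∀ a b c d : V, Γ.Adj a b → Γ.Adj c d →
      ∃ g ∈ G, (g a = c ∧ g b = d) ∨ (g a = d ∧ g b = c))
    (hnAT : ¬ ∀ a b c d : V, Γ.Adj a b → Γ.Adj c d → ∃ g ∈ G, g a = c ∧ g b = d)
    -- the bipartition {Δ, Δ′}
    (Δ Δ' : Set V) (hdisj : Disjoint Δ Δ') (hcover : Δ ∪ Δ' = Set.univ)
    (hbip : ∀ u v : V, Γ.Adj u v → ((u ∈ Δ ∧ v ∈ Δ') ∨ (u ∈ Δ' ∧ v ∈ Δ)))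
    -- G⁺ is the index-2 subgroup of G fixing the two biparts setwise
    (Gp : Subgroup (Equiv.Perm V)) (hGpG : Gp ≤ G) (hindex : Gp.relIndex G = 2)
    (hGp : ∀ g : Equiv.Perm V, g ∈ Gp ↔ (g ∈ G ∧ ∀ x ∈ Δ, g x ∈ Δ))
    -- basic of biquasiprimitive type: every nontrivial normal subgroup of G has
    -- at most two orbits on vertices
    (hbqp : ∀ M : Subgroup (Equiv.Perm V), M ≤ G → (∀ g ∈ G, ∀ m ∈ M, g * m * g⁻¹ ∈ M) →
      M ≠ ⊥ → ∃ x y : V, ∀ z : V, (∃ m ∈ M, m x = z) ∨ (∃ m ∈ M, m y = z))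
    -- N is a nontrivial intransitive normal subgroup of G
    (N : Subgroup (Equiv.Perm V)) (hNG : N ≤ G)
    (hNnorm : ∀ g ∈ G, ∀ n ∈ N, g * n * g⁻¹ ∈ N)
    (hNne : N ≠ ⊥)
    (hNintrans : ¬ ∀ x y : V, ∃ n ∈ N, n x = y) :
    -- the orbits of N are exactly Δ and Δ′, and N ≤ G⁺
    (∀ x y : V, (∃ n ∈ N, n x = y) ↔ ((x ∈ Δ ∧ y ∈ Δ) ∨ (x ∈ Δ' ∧ y ∈ Δ'))) ∧
    N ≤ Gp := by
  classical
  -- the N-orbit relation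
  let R : V → V → Prop := fun a b => ∃ n ∈ N, n a = b
  have hRrefl : ∀ a, R a a := fun a => ⟨1, N.one_mem, rfl⟩
  have hRsymm : ∀ {a b}, R a b → R b a := by
    rintro a b ⟨n, hn, rfl⟩
    exact ⟨n⁻¹, N.inv_mem hn, by simp⟩
  have hRtrans : ∀ {a b c}, R a b → R b c → R a c := by
    rintro a b c ⟨n, hn, rfl⟩ ⟨m, hm, rfl⟩
    exact ⟨m * n, N.mul_mem hm hn, by simp [Equiv.Perm.mul_apply]⟩
  have hRequi : ∀ g ∈ G, ∀ {a b}, R a b → R (g a) (g b) := by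
    rintro g hg a b ⟨n, hn, rfl⟩
    refine ⟨g * n * g⁻¹, hNnorm g hg n hn, ?_⟩
    simp [Equiv.Perm.mul_apply]
  -- two orbits covering V
  obtain ⟨x, y, htot⟩ := hbqp N hNG hNnorm hNne
  have hxy : ¬ R x y := by
    intro hxy
    apply hNintrans
    intro u v
    have hu : R x u ∨ R x u := by
      rcases htot u with h | h
      · exact Or.inl h
      · exact Or.inl (hRtrans hxy h)
    have hxu : R x u := hu.elim id id
    have hxv : R x v := by
      rcases htot v with h | h
      · exact h
      · exact hRtrans hxy h
    exact hRtrans (hRsymm hxu) hxv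
  have htot' : ∀ z, R x z ∨ R y z := htot
  -- existence of an edge crossing the orbits
  have hwalk : ∀ a b : V, ∀ _ : Γ.Walk a b, R a b ∨ ∃ c d, Γ.Adj c d ∧ ¬ R c d := by
    intro a b w
    induction w with
    | nil => exact Or.inl (hRrefl _)
    | @cons a c b h w ih =>
      rcases ih with hcb | hex
      · by_cases hac : R a c
        · exact Or.inl (hRtrans hac hcb)
        · exact Or.inr ⟨a, c, h, hac⟩
      · exact Or.inr hex
  obtain ⟨c, d, hcd, hncd⟩ : ∃ c d, Γ.Adj c d ∧ ¬ R c d := by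
    rcases hwalk x y (hconn x y).some with h | h
    · exact absurd h hxy
    · exact h
  -- no edge lies within a single orbit
  have hnoin : ∀ a b, Γ.Adj a b → ¬ R a b := by
    intro a b hab hRab
    obtain ⟨g, hg, hcase⟩ := hET a b c d hab hcd
    rcases hcase with ⟨h1, h2⟩ | ⟨h1, h2⟩
    · exact hncd (h1 ▸ h2 ▸ hRequi g hg hRab)
    · exact hncd (hRsymm (h1 ▸ h2 ▸ hRequi g hg hRab))
  -- membership facts for the bipartition
  have hmem : ∀ z : V, z ∈ Δ ∨ z ∈ Δ' := by
    intro z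
    have : z ∈ Δ ∪ Δ' := hcover.symm ▸ Set.mem_univ z
    exact this
  have hnotboth : ∀ z : V, ¬ (z ∈ Δ ∧ z ∈ Δ') :=
    fun z h => Set.disjoint_left.mp hdisj h.1 h.2
  -- both properties flip along edges
  have flipD : ∀ u v, Γ.Adj u v → (u ∈ Δ ↔ ¬ v ∈ Δ) := by
    intro u v h
    rcases hbip u v h with ⟨h1, h2⟩ | ⟨h1, h2⟩
    · exact ⟨fun _ hv => hnotboth v ⟨hv, h2⟩, fun _ => h1⟩
    · constructor
      · intro hu; exact absurd ⟨hu, h1⟩ (hnotboth u)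
      · intro hv; exact absurd h2 hv
  have flipO : ∀ u v, Γ.Adj u v → (R x u ↔ ¬ R x v) := by
    intro u v h
    constructor
    · intro hu hv
      exact hnoin u v h (hRtrans (hRsymm hu) hv)
    · intro hv
      rcases htot' u with h1 | h1
      · exact h1
      · rcases htot' v with h2 | h2
        · exact absurd h2 hv
        · exact absurd (hRtrans (hRsymm h1) h2) (hnoin u v h)
  -- parity lemma along walks
  have parity : ∀ (P : V → Prop), (∀ u v, Γ.Adj u v → (P u ↔ ¬ P v)) →
      ∀ (a b : V) (w : Γ.Walk a b), ((P a ↔ P b) ↔ Even w.length) := by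
    intro P hP a b w
    induction w with
    | nil => simp
    | @cons a c b h w ih =>
      have hac := hP _ _ h
      rw [SimpleGraph.Walk.length_cons, Nat.even_add_one, ← ih]
      tauto
  -- the two bipartitions coincide as equivalences
  have hsame : ∀ a b : V, (R x a ↔ R x b) ↔ (a ∈ Δ ↔ b ∈ Δ) := by
    intro a b
    obtain w := (hconn a b).some
    rw [parity (R x) flipO a b w, parity (· ∈ Δ) flipD a b w]
  -- R is the "same side" relation
  have hRiff : ∀ u v : V, R u v ↔ (R x u ↔ R x v) := by
    intro u v
    constructor
    · intro h
      exact ⟨fun h1 => hRtrans h1 h, fun h1 => hRtrans h1 (hRsymm h)⟩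
    · intro h
      by_cases h1 : R x u
      · exact hRtrans (hRsymm h1) (h.mp h1)
      · rcases htot' u with h2 | h2
        · exact absurd h2 h1
        · rcases htot' v with h3 | h3
          · exact absurd (h.mpr h3) h1
          · exact hRtrans (hRsymm h2) h3
  have main : ∀ u v : V, R u v ↔ ((u ∈ Δ ∧ v ∈ Δ) ∨ (u ∈ Δ' ∧ v ∈ Δ')) := by
    intro u v
    rw [hRiff, hsame]
    constructor
    · intro h
      by_cases hu : u ∈ Δ
      · exact Or.inl ⟨hu, h.mp hu⟩
      · rcases hmem u with h1 | h1
        · exact absurd h1 hu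
        · rcases hmem v with h2 | h2
          · exact absurd (h.mpr h2) hu
          · exact Or.inr ⟨h1, h2⟩
    · rintro (⟨h1, h2⟩ | ⟨h1, h2⟩)
      · exact ⟨fun _ => h2, fun _ => h1⟩
      · exact ⟨fun hu => absurd ⟨hu, h1⟩ (hnotboth u),
          fun hv => absurd ⟨hv, h2⟩ (hnotboth v)⟩
  refine ⟨main, ?_⟩
  intro n hn
  rw [hGp]
  refine ⟨hNG hn, fun z hz => ?_⟩
  have : R z (n z) := ⟨n, hn, rfl⟩
  rcases (main z (n z)).mp this with ⟨_, h⟩ | ⟨h, _⟩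
  · exact h
  · exact absurd ⟨hz, h⟩ (hnotboth z)
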